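/- arXiv:1911.00480 — 6 statements merged into one kernel-verified Lean document; each statement's English description precedes it below -/
import Mathlib

section
/- Let n ≥ 2 and let Q ∈ F_n with coefficients a_0 = 1, a_1, ..., a_n. Then for every j with 1 ≤ j ≤ n−1, one has a_j² ≥ a_{j−1} a_{j+1}. -/
open Polynomial Nat

private lemma splits_derivative (p : ℝ[X]) (h : p.Splits) :
    (derivative p).Splits := by
  by_cases hd : derivative p = 0
  · rw [hd]; exact Splits.zero
  have hdeg0 : p.natDegree ≠ 0 := by
    intro h0
    exact hd (derivative_of_natDegree_zero h0)
  rw [splits_iff_card_roots] at h ⊢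
  have h1 := Polynomial.card_roots_le_derivative p
  have h2 := Polynomial.card_roots' (derivative p)
  have h3 : (derivative p).natDegree < p.natDegree := natDegree_derivative_lt hdeg0
  omega

private lemma splits_iterate_derivative (m : ℕ) (p : ℝ[X]) (h : p.Splits) :
    (derivative^[m] p).Splits := by
  induction m with
  | zero => simpa using h
  | succ t ih =>
      rw [Function.iterate_succ_apply']
      exact splits_derivative _ ih

private lemma reflect_multiset_prod (s : Multiset ℝ) :
    reflect (Multiset.card s) (s.map (fun r => X - C r)).prod
      = (s.map (fun r => 1 - C r * X)).prod := by
  induction s using Multiset.induction_on with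
  | empty => simp [Polynomial.reflect_one]
  | cons r t ih =>
      have hcard : Multiset.card (r ::ₘ t) = 1 + Multiset.card t := by
        simp [add_comm]
      rw [hcard]
      have hprod : ((r ::ₘ t).map (fun r => X - C r)).prod
          = (X - C r) * ((t.map (fun r => X - C r)).prod) := by simp
      rw [hprod]
      have h1 : (X - C r : ℝ[X]).natDegree ≤ 1 := by
        simpa using (natDegree_X_sub_C r).le
      have h2 : ((t.map (fun r => X - C r)).prod).natDegree ≤ Multiset.card t :=
        le_of_eq (natDegree_multiset_prod_X_sub_C_eq_card t)
      rw [Polynomial.reflect_mul _ _ h1 h2, ih]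
      have : reflect 1 (X - C r : ℝ[X]) = 1 - C r * X := by
        rw [Polynomial.reflect_sub, Polynomial.reflect_C, reflect_one_X, pow_one]
      rw [this]
      simp

private lemma splits_multiset_prod_aux (s : Multiset ℝ) :
    ((s.map (fun r => 1 - C r * X)).prod).Splits := by
  induction s using Multiset.induction_on with
  | empty => simpa using Splits.one
  | cons r t ih =>
      have : ((r ::ₘ t).map (fun r => 1 - C r * X)).prod
          = (1 - C r * X) * ((t.map (fun r => 1 - C r * X)).prod) := by simp
      rw [this]
      refine Splits.mul ?_ ih
      apply Splits.of_natDegree_le_one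
      calc (1 - C r * X : ℝ[X]).natDegree ≤
          max (1 : ℝ[X]).natDegree (C r * X).natDegree := natDegree_sub_le _ _
        _ ≤ 1 := by
          simp [natDegree_C_mul_le]
          exact natDegree_C_mul_le r X |>.trans (by simp)

private lemma splits_reflect (N : ℕ) (p : ℝ[X]) (h : p.Splits)
    (hN : p.natDegree ≤ N) : (reflect N p).Splits := by
  by_cases hp : p = 0
  · rw [hp, Polynomial.reflect_zero]; exact Splits.zero
  set d := p.natDegree with hd
  have hcard : Multiset.card p.roots = d := splits_iff_card_roots.mp h
  have hfact : p = C p.leadingCoeff * (p.roots.map (fun a => X - C a)).prod :=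
    h.eq_prod_roots
  have hsplit : reflect N p = X ^ (N - d) * reflect d p := by
    have hNd : N = (N - d) + d := by omega
    calc reflect N p = reflect ((N - d) + d) (1 * p) := by rw [one_mul, ← hNd]
      _ = reflect (N - d) 1 * reflect d p := by
          refine Polynomial.reflect_mul _ _ ?_ ?_ <;> simp [hd]
      _ = X ^ (N - d) * reflect d p := by rw [Polynomial.reflect_one]
  have hrefl : reflect d p = C p.leadingCoeff * (p.roots.map (fun r => 1 - C r * X)).prod := by
    conv_lhs => rw [hfact]
    rw [Polynomial.reflect_C_mul]
    rw [← hcard, reflect_multiset_prod]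
  rw [hsplit, hrefl]
  refine Splits.mul (Splits.pow Splits.X _) ?_
  exact Splits.mul (Splits.C _) (splits_multiset_prod_aux _)

private lemma quadratic_discriminant (T : ℝ[X]) (h : T.Splits)
    (hdeg : T.natDegree ≤ 2) : 4 * (T.coeff 0 * T.coeff 2) ≤ (T.coeff 1) ^ 2 := by
  by_cases hT : T = 0
  · simp [hT]
  by_cases h2 : T.natDegree ≤ 1
  · have : T.coeff 2 = 0 := coeff_eq_zero_of_natDegree_lt (by omega)
    rw [this]
    simp [sq_nonneg]
  have hd2 : T.natDegree = 2 := by omega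
  have hcard : Multiset.card T.roots = 2 := by
    rw [splits_iff_card_roots.mp h, hd2]
  obtain ⟨u, v, huv⟩ := Multiset.card_eq_two.mp hcard
  have hfact : T = C T.leadingCoeff * ((X - C u) * (X - C v)) := by
    have := h.eq_prod_roots
    rw [huv] at this
    simpa using this
  set a := T.leadingCoeff with ha
  have hexp : T = C a * X ^ 2 - C (a * (u + v)) * X + C (a * (u * v)) := by
    rw [hfact]; simp only [C_mul, C_add]; ring
  have h0 : T.coeff 0 = a * (u * v) := by rw [hexp]; simp
  have h1 : T.coeff 1 = -(a * (u + v)) := by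
    rw [hexp]
    simp [coeff_X_pow, coeff_C]
  have hc2 : T.coeff 2 = a := by
    rw [hexp]
    simp [coeff_X_pow, coeff_C]
  rw [h0, h1, hc2]
  nlinarith [sq_nonneg (a * (u - v)), sq_nonneg (a * (u + v))]

private lemma factorial_log_concave (m : ℕ) : (m + 1)! * (m + 1)! ≤ (m + 2)! * m ! := by
  have h1 : (m + 1)! = (m + 1) * m ! := Nat.factorial_succ m
  have h2 : (m + 2)! = (m + 2) * (m + 1)! := Nat.factorial_succ (m + 1)
  calc (m + 1)! * (m + 1)! = (m + 1) * ((m + 1)! * m !) := by rw [h1]; ring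
    _ ≤ (m + 2) * ((m + 1)! * m !) := by
        exact Nat.mul_le_mul_right _ (by omega)
    _ = (m + 2)! * m ! := by rw [h2]; ring

theorem stmt_1 (n : ℕ) (hn : 2 ≤ n)
    (x : Fin n → ℤ) (hx : ∀ i, x i ≠ 0)
    (Q : Polynomial ℤ) (hQ : Q = ∏ i, (X - C (x i))) :
    ∀ j : ℕ, 1 ≤ j → j ≤ n - 1 →
      (Q.coeff (n - j)) ^ 2 ≥ Q.coeff (n - (j - 1)) * Q.coeff (n - (j + 1)) := by
  intro j hj1 hj2
  -- setup over ℝ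
  set P : ℝ[X] := ∏ i, (X - C ((x i : ℝ))) with hP
  have hmap : Q.map (Int.castRingHom ℝ) = P := by
    rw [hQ, Polynomial.map_prod]
    simp [hP]
  have hPcoeff : ∀ t, P.coeff t = ((Q.coeff t : ℤ) : ℝ) := by
    intro t
    rw [← hmap, Polynomial.coeff_map]
    simp
  have hPdeg : P.natDegree = n := by
    rw [hP, natDegree_prod_of_monic _ _ (fun i _ => monic_X_sub_C _)]
    simp only [natDegree_X_sub_C, Finset.sum_const, Finset.card_univ, Fintype.card_fin,
      smul_eq_mul, mul_one]
  have hPsplits : P.Splits :=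
    Splits.prod (fun i _ => Splits.X_sub_C _)
  -- indices
  set k : ℕ := n - j with hk
  have hkj : k + j = n := by omega
  have hk1 : 1 ≤ k := by omega
  obtain ⟨m, hm⟩ : ∃ m, j = m + 1 := ⟨j - 1, by omega⟩
  obtain ⟨l, hl⟩ : ∃ l, k = l + 1 := ⟨k - 1, by omega⟩
  -- the chain of polynomials
  set Q1 : ℝ[X] := derivative^[k - 1] P with hQ1
  set R : ℝ[X] := reflect (j + 1) Q1 with hR
  set T : ℝ[X] := derivative^[j - 1] R with hT
  have hQ1deg : Q1.natDegree ≤ j + 1 := by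
    rw [hQ1]
    have := Polynomial.natDegree_iterate_derivative P (k - 1)
    omega
  have hQ1splits : Q1.Splits := splits_iterate_derivative _ _ hPsplits
  have hRsplits : R.Splits := splits_reflect _ _ hQ1splits hQ1deg
  have hRdeg : R.natDegree ≤ j + 1 := by
    rw [natDegree_le_iff_coeff_eq_zero]
    intro N hN
    rw [hR, coeff_reflect, revAt_eq_self_of_lt hN]
    exact coeff_eq_zero_of_natDegree_lt (by omega)
  have hTsplits : T.Splits := splits_iterate_derivative _ _ hRsplits
  have hTdeg : T.natDegree ≤ 2 := by
    rw [hT]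
    have := Polynomial.natDegree_iterate_derivative R (j - 1)
    omega
  -- coefficients of T
  have hRcoeff : ∀ i, i ≤ j + 1 → R.coeff i = Q1.coeff (j + 1 - i) := by
    intro i hi
    rw [hR, coeff_reflect, revAt_le hi]
  have hQ1coeff : ∀ i, Q1.coeff i = ((i + (k - 1)).descFactorial (k - 1) : ℝ) *
      P.coeff (i + (k - 1)) := by
    intro i
    rw [hQ1, Polynomial.coeff_iterate_derivative, nsmul_eq_mul]
  have hTcoeff : ∀ i, T.coeff i = ((i + (j - 1)).descFactorial (j - 1) : ℝ) *
      R.coeff (i + (j - 1)) := by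
    intro i
    rw [hT, Polynomial.coeff_iterate_derivative, nsmul_eq_mul]
  set A : ℝ := P.coeff (k + 1) with hA
  set B : ℝ := P.coeff k with hB
  set Cc : ℝ := P.coeff (k - 1) with hCc
  have ht0 : T.coeff 0 = ((j - 1).descFactorial (j - 1) : ℝ) *
      (((k + 1).descFactorial (k - 1) : ℝ) * A) := by
    rw [hTcoeff 0]
    rw [show (0 + (j-1)) = j - 1 by omega]
    rw [hRcoeff (j - 1) (by omega)]
    rw [show j + 1 - (j - 1) = 2 by omega]
    rw [hQ1coeff 2]
    rw [show 2 + (k - 1) = k + 1 by omega]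
  have ht1 : T.coeff 1 = (j.descFactorial (j - 1) : ℝ) *
      ((k.descFactorial (k - 1) : ℝ) * B) := by
    rw [hTcoeff 1]
    rw [show (1 + (j-1)) = j by omega]
    rw [hRcoeff j (by omega)]
    rw [show j + 1 - j = 1 by omega]
    rw [hQ1coeff 1]
    rw [show 1 + (k - 1) = k by omega]
  have ht2 : T.coeff 2 = ((j + 1).descFactorial (j - 1) : ℝ) *
      (((k - 1).descFactorial (k - 1) : ℝ) * Cc) := by
    rw [hTcoeff 2]
    rw [show (2 + (j-1)) = j + 1 by omega]
    rw [hRcoeff (j + 1) (by omega)]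
    rw [show j + 1 - (j + 1) = 0 by omega]
    rw [hQ1coeff 0]
    rw [show 0 + (k - 1) = k - 1 by omega]
  have hdisc := quadratic_discriminant T hTsplits hTdeg
  rw [ht0, ht1, ht2] at hdisc
  -- descFactorial values
  have hdf1 : (j - 1).descFactorial (j - 1) = m ! := by
    rw [hm]; simp [Nat.descFactorial_self]
  have hdf2 : j.descFactorial (j - 1) = (m + 1)! := by
    rw [hm]
    simp only [Nat.add_sub_cancel]
    have := Nat.descFactorial_self (m + 1)
    rwa [Nat.descFactorial_succ, show m + 1 - m = 1 by omega, one_mul] at this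
  have hdf3 : (j + 1).descFactorial (j - 1) * 2 = (m + 2)! := by
    rw [hm]
    simp only [Nat.add_sub_cancel]
    rw [show m + 1 + 1 = m + 2 from rfl]
    have := Nat.descFactorial_self (m + 2)
    rw [Nat.descFactorial_succ, Nat.descFactorial_succ] at this
    rw [show m + 2 - (m+1) = 1 by omega, show m + 2 - m = 2 by omega] at this
    rw [mul_comm]
    omega
  have hdf4 : (k - 1).descFactorial (k - 1) = l ! := by
    rw [hl]; simp [Nat.descFactorial_self]
  have hdf5 : k.descFactorial (k - 1) = (l + 1)! := by
    rw [hl]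
    simp only [Nat.add_sub_cancel]
    have := Nat.descFactorial_self (l + 1)
    rwa [Nat.descFactorial_succ, show l + 1 - l = 1 by omega, one_mul] at this
  have hdf6 : (k + 1).descFactorial (k - 1) * 2 = (l + 2)! := by
    rw [hl]
    simp only [Nat.add_sub_cancel]
    rw [show l + 1 + 1 = l + 2 from rfl]
    have := Nat.descFactorial_self (l + 2)
    rw [Nat.descFactorial_succ, Nat.descFactorial_succ] at this
    rw [show l + 2 - (l+1) = 1 by omega, show l + 2 - l = 2 by omega] at this
    rw [mul_comm]
    omega
  -- numeric inequality : (β b')² ≤ 4 α γ a' c'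
  have hnum : ((j.descFactorial (j-1)) * (k.descFactorial (k-1)))^2 ≤
      4 * (((j-1).descFactorial (j-1)) * ((k+1).descFactorial (k-1))) *
        (((j+1).descFactorial (j-1)) * ((k-1).descFactorial (k-1))) := by
    have key : 4 * (((j-1).descFactorial (j-1)) * ((k+1).descFactorial (k-1))) *
        (((j+1).descFactorial (j-1)) * ((k-1).descFactorial (k-1)))
        = ((m+2)! * m !) * ((l+2)! * l !) := by
      rw [hdf1, hdf4]
      have : 4 * (m ! * ((k+1).descFactorial (k-1))) * (((j+1).descFactorial (j-1)) * l !)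
          = (((j+1).descFactorial (j-1) * 2) * m !) * (((k+1).descFactorial (k-1) * 2) * l !) := by
        ring
      rw [this, hdf3, hdf6]
    rw [key, hdf2, hdf5]
    calc ((m+1)! * (l+1)!)^2 = ((m+1)! * (m+1)!) * ((l+1)! * (l+1)!) := by ring
      _ ≤ ((m+2)! * m !) * ((l+2)! * l !) :=
          Nat.mul_le_mul (factorial_log_concave m) (factorial_log_concave l)
  -- conclude over ℝ
  have hBineq : B ^ 2 ≥ A * Cc := by
    rcases le_or_gt (A * Cc) 0 with hAC | hAC
    · exact le_trans hAC (sq_nonneg B)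
    · set α : ℝ := ((j-1).descFactorial (j-1) : ℝ) with hα
      set β : ℝ := (j.descFactorial (j-1) : ℝ) with hβ
      set γ : ℝ := ((j+1).descFactorial (j-1) : ℝ) with hγ
      set a' : ℝ := ((k+1).descFactorial (k-1) : ℝ) with ha'
      set b' : ℝ := (k.descFactorial (k-1) : ℝ) with hb'
      set c' : ℝ := ((k-1).descFactorial (k-1) : ℝ) with hc'
      have hnumR : (β * b')^2 ≤ 4 * (α * a') * (γ * c') := by
        rw [hα, hβ, hγ, ha', hb', hc']
        exact_mod_cast hnum
      have hβpos : (0:ℝ) < β * b' := by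
        rw [hβ, hb']
        rw [hdf2, hdf5]
        have h1 := Nat.factorial_pos (m+1)
        have h2 := Nat.factorial_pos (l+1)
        have h1' : (0:ℝ) < ((m+1)! : ℕ) := by exact_mod_cast h1
        have h2' : (0:ℝ) < ((l+1)! : ℕ) := by exact_mod_cast h2
        exact mul_pos h1' h2'
      -- hdisc : 4 * ((α * (a' * A)) * (γ * (c' * Cc))) ≤ (β * (b' * B))^2
      have key : (β * b')^2 * (A * Cc) ≤ (β * b')^2 * B^2 := by
        calc (β * b')^2 * (A * Cc) ≤ (4 * (α * a') * (γ * c')) * (A * Cc) := by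
              exact mul_le_mul_of_nonneg_right hnumR (le_of_lt hAC)
          _ = 4 * ((α * (a' * A)) * (γ * (c' * Cc))) := by ring
          _ ≤ (β * (b' * B))^2 := hdisc
          _ = (β * b')^2 * B^2 := by ring
      exact le_of_mul_le_mul_left key (pow_pos hβpos 2)
  -- cast back to ℤ
  have hidx1 : n - (j - 1) = k + 1 := by omega
  have hidx2 : n - (j + 1) = k - 1 := by omega
  rw [hidx1, hidx2]
  have hAc : A = ((Q.coeff (k+1) : ℤ) : ℝ) := by rw [hA, hPcoeff]
  have hBc : B = ((Q.coeff k : ℤ) : ℝ) := by rw [hB, hPcoeff]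
  have hCcc : Cc = ((Q.coeff (k-1) : ℤ) : ℝ) := by rw [hCc, hPcoeff]
  rw [hAc, hBc, hCcc] at hBineq
  exact_mod_cast hBineq
end

section
/- Let n ≥ 3 and let Q ∈ F_n with coefficients a_0 = 1, a_1, ..., a_n. Then for every j with 1 ≤ j ≤ n−2, one has 4(a_j² − a_{j−1} a_{j+1})(a_{j+1}² − a_j a_{j+2}) ≥ (a_{j−1} a_{j+2} − a_j a_{j+1})². -/
open Polynomial Multiset


-- esymm basics
lemma my_esymm_eq_zero {s : Multiset ℝ} {k : ℕ} (h : Multiset.card s < k) : s.esymm k = 0 := by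
  obtain ⟨i, hi, rfl⟩ : ∃ i, 0 < i ∧ k = Multiset.card s + i := ⟨k - Multiset.card s, by omega, by omega⟩
  rw [Multiset.esymm, Multiset.powersetCard_card_add _ hi]
  simp

lemma my_esymm_cons (a : ℝ) (s : Multiset ℝ) (k : ℕ) :
    (a ::ₘ s).esymm (k+1) = s.esymm (k+1) + a * s.esymm k := by
  rw [Multiset.esymm, Multiset.powersetCard_cons, Multiset.map_add, Multiset.sum_add]
  congr 1
  rw [Multiset.esymm, Multiset.map_map, ← Multiset.sum_map_mul_left]
  congr 1
  apply Multiset.map_congr rfl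
  intro t _
  simp [Multiset.prod_cons]


lemma my_card_roots_iterate (p : ℝ[X]) (i : ℕ) :
    Multiset.card p.roots ≤ Multiset.card ((derivative^[i]) p).roots + i := by
  induction i with
  | zero => simp
  | succ i ih =>
      rw [Function.iterate_succ_apply']
      calc Multiset.card p.roots ≤ Multiset.card ((derivative^[i]) p).roots + i := ih
        _ ≤ (Multiset.card (derivative ((derivative^[i]) p)).roots + 1) + i :=
            Nat.add_le_add_right (Polynomial.card_roots_le_derivative _) i
        _ = Multiset.card (derivative ((derivative^[i]) p)).roots + (i+1) := by ring

lemma my_reverse_one : (1 : ℝ[X]).reverse = 1 := by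
  rw [← Polynomial.C_1, Polynomial.reverse_C]

lemma my_reverse_multiset_prod (t : Multiset ℝ[X]) :
    t.prod.reverse = (t.map Polynomial.reverse).prod := by
  induction t using Multiset.induction_on with
  | empty => simp [my_reverse_one]
  | cons a t ih => simp [Multiset.prod_cons, Polynomial.reverse_mul_of_domain, ih]

lemma my_reverse_X_sub_C (a : ℝ) : (X - C a).reverse = 1 - C a * X := by
  have h1 : (X : ℝ[X]) - C a = X + C (-a) := by rw [map_neg]; ring
  have hX : (X : ℝ[X]).reverse = 1 := by
    have := Polynomial.reverse_X_mul (1 : ℝ[X])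
    rw [mul_one, my_reverse_one] at this
    exact this
  rw [h1, Polynomial.reverse_add_C, Polynomial.natDegree_X, hX, map_neg, pow_one]
  ring


lemma my_dF1 (a : ℕ) : (a+1).descFactorial a = (a+1).factorial := by
  induction a with
  | zero => rfl
  | succ a ih => rw [Nat.succ_descFactorial_succ, Nat.factorial_succ, ih]

lemma my_dF2 (a : ℕ) : 2 * (a+2).descFactorial a = (a+2).factorial := by
  induction a with
  | zero => rfl
  | succ a ih =>
      rw [show a+1+2 = (a+2)+1 from rfl, Nat.succ_descFactorial_succ, Nat.factorial_succ,
        ← ih]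
      ring

lemma my_nat_key (k d : ℕ) :
    ((k+1).descFactorial k * (d+1).descFactorial d)^2
      ≤ 4 * ((k+2).descFactorial k * d.descFactorial d)
          * (k.descFactorial k * (d+2).descFactorial d) := by
  have h1 := my_dF1 k
  have h2 := my_dF1 d
  have h3 := my_dF2 k
  have h4 := my_dF2 d
  have hk : Nat.descFactorial k k = k.factorial := Nat.descFactorial_self k
  have hd : Nat.descFactorial d d = d.factorial := Nat.descFactorial_self d
  have hmul : (k+1)*(d+1) ≤ (k+2)*(d+2) := by nlinarith
  have key : ((k+1).factorial * (d+1).factorial)^2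
      ≤ ((k+2).factorial * d.factorial) * (k.factorial * (d+2).factorial) := by
    rw [Nat.factorial_succ (k+1), Nat.factorial_succ k, Nat.factorial_succ (d+1),
      Nat.factorial_succ d]
    calc ((k+1) * k.factorial * ((d+1) * d.factorial))^2
        = ((k+1)*(d+1)) * ((k+1)*(d+1)*(k.factorial*d.factorial)^2) := by ring
      _ ≤ ((k+2)*(d+2)) * ((k+1)*(d+1)*(k.factorial*d.factorial)^2) :=
          Nat.mul_le_mul_right _ hmul
      _ = (k+1+1) * ((k+1) * k.factorial) * d.factorial
            * (k.factorial * ((d+1+1) * ((d+1) * d.factorial))) := by ring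
  calc ((k+1).descFactorial k * (d+1).descFactorial d)^2
      = ((k+1).factorial * (d+1).factorial)^2 := by rw [h1, h2]
    _ ≤ ((k+2).factorial * d.factorial) * (k.factorial * (d+2).factorial) := key
    _ = (2 * (k+2).descFactorial k * d.descFactorial d)
          * (k.descFactorial k * (2 * (d+2).descFactorial d)) := by rw [hk, hd, h3, h4]
    _ = 4 * ((k+2).descFactorial k * d.descFactorial d)
          * (k.descFactorial k * (d+2).descFactorial d) := by ring



lemma my_reverse_RR (q : ℝ[X]) (h0 : q.coeff 0 ≠ 0)
    (hc : Multiset.card q.roots = q.natDegree) :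
    Multiset.card q.reverse.roots = q.natDegree ∧ q.reverse.natDegree = q.natDegree := by
  have hq : q ≠ 0 := fun h => h0 (by simp [h])
  have hsp : Multiset.card q.roots = q.natDegree := hc
  have hfac := (Polynomial.C_leadingCoeff_mul_prod_multiset_X_sub_C hsp).symm
  have hroots_ne : ∀ a ∈ q.roots, a ≠ 0 := by
    intro a ha h
    subst h
    have := (Polynomial.mem_roots hq).mp ha
    rw [Polynomial.IsRoot, ← Polynomial.coeff_zero_eq_eval_zero] at this
    exact h0 this
  -- compute reverse q
  have hrev : q.reverse
      = C (q.leadingCoeff * ((q.roots.map fun a => -a)).prod)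
        * ((q.roots.map fun a => a⁻¹).map fun b => X - C b).prod := by
    conv_lhs => rw [hfac]
    rw [Polynomial.reverse_mul_of_domain, Polynomial.reverse_C, my_reverse_multiset_prod,
      Multiset.map_map]
    have hcong : (q.roots.map fun a => ((X - C a).reverse)) =
        q.roots.map (fun a => C (-a) * (X - C a⁻¹)) := by
      apply Multiset.map_congr rfl
      intro a ha
      rw [my_reverse_X_sub_C]
      rw [map_neg, neg_mul, mul_sub, ← Polynomial.C_mul,
        mul_inv_cancel₀ (hroots_ne a ha), Polynomial.C_1]
      ring
    simp only [Function.comp_def]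
    rw [hcong, Multiset.prod_map_mul, Multiset.map_map]
    have : (q.roots.map fun a => (C (-a) : ℝ[X])).prod = C ((q.roots.map fun a => -a)).prod := by
      rw [show (fun a : ℝ => (C (-a) : ℝ[X])) = (⇑(Polynomial.C : ℝ →+* ℝ[X]) ∘ fun a => -a) from rfl,
        ← Multiset.map_map]
      exact (map_multiset_prod (Polynomial.C : ℝ →+* ℝ[X]) _).symm
    rw [this, map_mul]
    simp only [Function.comp_def]
    ring
  have hcne : q.leadingCoeff * ((q.roots.map fun a => -a)).prod ≠ 0 := by
    apply mul_ne_zero (Polynomial.leadingCoeff_ne_zero.mpr hq)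
    apply Multiset.prod_ne_zero
    intro h
    obtain ⟨a, ha, ha0⟩ := Multiset.mem_map.mp h
    exact hroots_ne a ha (neg_eq_zero.mp ha0)
  constructor
  · rw [hrev, Polynomial.roots_C_mul _ hcne, Polynomial.roots_multiset_prod_X_sub_C,
      Multiset.card_map, hc]
  · rw [hrev, Polynomial.natDegree_C_mul hcne,
      Polynomial.natDegree_multiset_prod_X_sub_C_eq_card, Multiset.card_map, hc]



lemma my_dF_pos {n k : ℕ} (h : k ≤ n) : 0 < n.descFactorial k :=
  Nat.pos_of_ne_zero fun h0 => absurd (Nat.descFactorial_eq_zero_iff_lt.mp h0) (by omega)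

lemma my_rawR (s : Multiset ℝ) (k : ℕ) : s.esymm k * s.esymm (k+2) ≤ s.esymm (k+1)^2 := by
  by_cases h2 : s.esymm (k+2) = 0
  · rw [h2, mul_zero]; positivity
  have hkm : k + 2 ≤ Multiset.card s := by
    by_contra h
    exact h2 (my_esymm_eq_zero (by omega))
  set m := Multiset.card s with hm
  set d := m - (k+2) with hd
  set p : ℝ[X] := (s.map fun y => X - C y).prod with hp
  have hproots : p.roots = s := Polynomial.roots_multiset_prod_X_sub_C s
  have hpdeg : p.natDegree = m := by
    rw [hp, Polynomial.natDegree_multiset_prod_X_sub_C_eq_card]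
  have hpcoeff : ∀ t, t ≤ m → p.coeff t = (-1)^(m-t) * s.esymm (m-t) := by
    intro t ht
    exact Multiset.prod_X_sub_C_coeff s ht
  set q := (derivative^[d]) p with hq
  have hqcoeff : ∀ i, q.coeff i = ((i+d).descFactorial d : ℝ) * p.coeff (i+d) := by
    intro i
    rw [hq, Polynomial.coeff_iterate_derivative, nsmul_eq_mul]
  have hqdeg_le : q.natDegree ≤ k+2 := by
    have h1 := Polynomial.natDegree_iterate_derivative p d
    rw [← hq, hpdeg] at h1
    omega
  have hqroots_ge : k+2 ≤ Multiset.card q.roots := by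
    have h1 := my_card_roots_iterate p d
    rw [← hq, hproots] at h1
    omega
  have hqcard : Multiset.card q.roots = q.natDegree := by
    have := Polynomial.card_roots' q
    omega
  have hqdeg : q.natDegree = k+2 := by
    have := Polynomial.card_roots' q
    omega
  -- the three relevant coefficients of q
  have hco0 : q.coeff 0 = ((d.descFactorial d : ℝ)) * ((-1)^(k+2) * s.esymm (k+2)) := by
    rw [hqcoeff 0, zero_add, hpcoeff d (by omega), show m - d = k+2 from by omega]
  have hco1 : q.coeff 1 = (((d+1).descFactorial d : ℝ)) * ((-1)^(k+1) * s.esymm (k+1)) := by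
    rw [hqcoeff 1, show (1+d) = d+1 from by omega, hpcoeff (d+1) (by omega),
      show m - (d+1) = k+1 from by omega]
  have hco2 : q.coeff 2 = (((d+2).descFactorial d : ℝ)) * ((-1)^k * s.esymm k) := by
    rw [hqcoeff 2, show (2+d) = d+2 from by omega, hpcoeff (d+2) (by omega),
      show m - (d+2) = k from by omega]
  have hq0 : q.coeff 0 ≠ 0 := by
    rw [hco0]
    have hdpos : (0:ℝ) < (d.descFactorial d : ℝ) := by
      exact_mod_cast my_dF_pos (le_refl d)
    exact mul_ne_zero (ne_of_gt hdpos) (mul_ne_zero (pow_ne_zero _ (by norm_num)) h2)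
  obtain ⟨hrc, hrd⟩ := my_reverse_RR q hq0 hqcard
  set r := q.reverse with hr
  have hrcoeff : ∀ i, i ≤ k+2 → r.coeff i = q.coeff (k+2-i) := by
    intro i hi
    rw [hr, Polynomial.coeff_reverse, hqdeg, Polynomial.revAt_le hi]
  set u := (derivative^[k]) r with hu
  have hucoeff : ∀ i, u.coeff i = ((i+k).descFactorial k : ℝ) * r.coeff (i+k) := by
    intro i
    rw [hu, Polynomial.coeff_iterate_derivative, nsmul_eq_mul]
  have hudeg : u.natDegree < 3 := by
    have h1 := Polynomial.natDegree_iterate_derivative r k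
    rw [← hu, hrd, hqdeg] at h1
    omega
  have huroots : 2 ≤ Multiset.card u.roots := by
    have h1 := my_card_roots_iterate r k
    rw [← hu, hrc, hqdeg] at h1
    omega
  obtain ⟨ρ, hρ⟩ : ∃ ρ, ρ ∈ u.roots := by
    apply Multiset.exists_mem_of_ne_zero
    intro h
    rw [h] at huroots
    simp at huroots
  have heval : u.coeff 0 + u.coeff 1 * ρ + u.coeff 2 * (ρ*ρ) = 0 := by
    have hz := (Polynomial.mem_roots'.mp hρ).2
    rw [Polynomial.IsRoot, Polynomial.eval_eq_sum_range' hudeg] at hz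
    rw [Finset.sum_range_succ, Finset.sum_range_succ, Finset.sum_range_one] at hz
    rw [← hz]
    ring
  -- identify the coefficients of u
  have hu0 : u.coeff 0 = ((k.descFactorial k : ℝ) * ((d+2).descFactorial d : ℝ))
      * ((-1)^k * s.esymm k) := by
    rw [hucoeff 0, zero_add, hrcoeff k (by omega), show k+2-k = 2 from by omega, hco2]
    ring
  have hu1 : u.coeff 1 = (((k+1).descFactorial k : ℝ) * ((d+1).descFactorial d : ℝ))
      * ((-1)^(k+1) * s.esymm (k+1)) := by
    rw [hucoeff 1, show (1+k) = k+1 from by omega, hrcoeff (k+1) (by omega),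
      show k+2-(k+1) = 1 from by omega, hco1]
    ring
  have hu2 : u.coeff 2 = (((k+2).descFactorial k : ℝ) * (d.descFactorial d : ℝ))
      * ((-1)^(k+2) * s.esymm (k+2)) := by
    rw [hucoeff 2, show (2+k) = k+2 from by omega, hrcoeff (k+2) (by omega),
      show k+2-(k+2) = 0 from by omega, hco0]
    ring
  -- discriminant inequality
  set E0 := s.esymm k
  set E1 := s.esymm (k+1)
  set E2 := s.esymm (k+2)
  set ca : ℝ := ((k+2).descFactorial k : ℝ) * (d.descFactorial d : ℝ) with hca
  set cb : ℝ := ((k+1).descFactorial k : ℝ) * ((d+1).descFactorial d : ℝ) with hcb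
  set cc : ℝ := (k.descFactorial k : ℝ) * ((d+2).descFactorial d : ℝ) with hcc
  have hsq : ((-1:ℝ)^k)^2 = 1 := by
    rw [← pow_mul, mul_comm, pow_mul, neg_one_sq, one_pow]
  have hs1 : ((-1:ℝ)^(k+1)) = -((-1:ℝ)^k) := by rw [pow_succ]; ring
  have hs2 : ((-1:ℝ)^(k+2)) = ((-1:ℝ)^k) := by rw [pow_add]; norm_num
  have hdisc : 4 * (ca * cc) * (E0 * E2) ≤ cb^2 * E1^2 := by
    rw [hu0, hu1, hu2, hs1, hs2] at heval
    have heval' : cc * E0 - cb * E1 * ρ + ca * E2 * (ρ*ρ) = 0 := by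
      linear_combination ((-1:ℝ)^k) * heval
        - (cc*E0 - cb*E1*ρ + ca*E2*(ρ*ρ)) * hsq
    have h4 : 4*ca*E2*(cc * E0 - cb * E1 * ρ + ca * E2 * (ρ*ρ)) = 0 := by
      rw [heval']; ring
    nlinarith [sq_nonneg (cb*E1 - 2*ca*E2*ρ), h4]
  have hkey : (cb^2 : ℝ) ≤ 4 * (ca * cc) := by
    have hN := my_nat_key k d
    calc cb^2 = ((((k+1).descFactorial k * (d+1).descFactorial d)^2 : ℕ) : ℝ) := by
          rw [hcb]; push_cast; ring
      _ ≤ ((4 * ((k+2).descFactorial k * d.descFactorial d)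
            * (k.descFactorial k * (d+2).descFactorial d) : ℕ) : ℝ) := Nat.cast_le.mpr hN
      _ = 4 * (ca * cc) := by rw [hca, hcc]; push_cast; ring
  rcases le_or_gt (E0 * E2) 0 with hneg | hpos
  · calc E0 * E2 ≤ 0 := hneg
      _ ≤ E1^2 := sq_nonneg E1
  · have hcbpos : 0 < cb := by
      rw [hcb]
      have ha : (0:ℝ) < ((k+1).descFactorial k : ℝ) := by
        exact_mod_cast my_dF_pos (by omega)
      have hb : (0:ℝ) < ((d+1).descFactorial d : ℝ) := by
        exact_mod_cast my_dF_pos (by omega)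
      exact mul_pos ha hb
    have step1 : cb^2 * (E0 * E2) ≤ 4 * (ca * cc) * (E0 * E2) :=
      mul_le_mul_of_nonneg_right hkey (le_of_lt hpos)
    have step2 : cb^2 * (E0 * E2) ≤ cb^2 * E1^2 := le_trans step1 hdisc
    have hcb2 : (0:ℝ) < cb^2 := pow_pos hcbpos 2
    exact le_of_mul_le_mul_left step2 hcb2



lemma my_strong (s : Multiset ℝ) (k : ℕ) :
    (s.esymm (k+1) * s.esymm (k+2) - s.esymm k * s.esymm (k+3))^2
      ≤ 4 * ((s.esymm (k+1))^2 - s.esymm k * s.esymm (k+2))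
          * ((s.esymm (k+2))^2 - s.esymm (k+1) * s.esymm (k+3)) := by
  have key : ∀ t : ℝ, 0 ≤ ((s.esymm (k+1))^2 - s.esymm k * s.esymm (k+2)) * (t * t)
      + (s.esymm (k+1) * s.esymm (k+2) - s.esymm k * s.esymm (k+3)) * t
      + ((s.esymm (k+2))^2 - s.esymm (k+1) * s.esymm (k+3)) := by
    intro t
    have h := my_rawR (t ::ₘ s) (k+1)
    rw [my_esymm_cons t s k, my_esymm_cons t s (k+1), my_esymm_cons t s (k+2)] at h
    nlinarith [h]
  have hd := discrim_le_zero key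
  rw [discrim] at hd
  nlinarith [hd]

lemma my_esymm_cast (s : Multiset ℤ) (i : ℕ) :
    ((s.esymm i : ℤ) : ℝ) = (s.map (fun z : ℤ => (z : ℝ))).esymm i := by
  rw [Multiset.esymm, Multiset.esymm, Multiset.powersetCard_map, Multiset.map_map]
  have h1 : ((Multiset.map Multiset.prod (s.powersetCard i)).sum : ℝ)
      = ((Multiset.map Multiset.prod (s.powersetCard i)).map (fun z : ℤ => (z:ℝ))).sum :=
    map_multiset_sum (Int.castRingHom ℝ) _
  rw [h1, Multiset.map_map]
  apply congrArg
  apply Multiset.map_congr rfl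
  intro t _
  simp only [Function.comp_apply]
  exact map_multiset_prod (Int.castRingHom ℝ) t

lemma my_strong_int (s : Multiset ℤ) (k : ℕ) :
    (s.esymm (k+1) * s.esymm (k+2) - s.esymm k * s.esymm (k+3))^2
      ≤ 4 * ((s.esymm (k+1))^2 - s.esymm k * s.esymm (k+2))
          * ((s.esymm (k+2))^2 - s.esymm (k+1) * s.esymm (k+3)) := by
  have h := my_strong (s.map (fun z : ℤ => (z : ℝ))) k
  rw [← my_esymm_cast, ← my_esymm_cast, ← my_esymm_cast, ← my_esymm_cast] at h
  exact_mod_cast h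



theorem stmt_2 (n : ℕ) (hn : 3 ≤ n)
    (x : Fin n → ℤ) (hx : ∀ i, x i ≠ 0)
    (Q : Polynomial ℤ) (hQ : Q = ∏ i, (X - C (x i))) :
    ∀ j : ℕ, 1 ≤ j → j ≤ n - 2 →
      4 * ((Q.coeff (n - j)) ^ 2 - Q.coeff (n - (j - 1)) * Q.coeff (n - (j + 1))) *
          ((Q.coeff (n - (j + 1))) ^ 2 - Q.coeff (n - j) * Q.coeff (n - (j + 2))) ≥
        (Q.coeff (n - (j - 1)) * Q.coeff (n - (j + 2)) -
          Q.coeff (n - j) * Q.coeff (n - (j + 1))) ^ 2 := by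
  intro j hj1 hj2
  obtain ⟨k, rfl⟩ : ∃ k, j = k + 1 := ⟨j - 1, by omega⟩
  have hkn : k + 3 ≤ n := by omega
  set sZ : Multiset ℤ := Finset.univ.val.map x with hsZ
  have hcard : Multiset.card sZ = n := by
    rw [hsZ, Multiset.card_map]
    simp
  have hQprod : Q = (sZ.map fun y => X - C y).prod := by
    rw [hQ, hsZ, Multiset.map_map, Finset.prod_eq_multiset_prod]
    rfl
  have hcoeff : ∀ i, i ≤ n → Q.coeff (n - i) = (-1)^i * sZ.esymm i := by
    intro i hi
    have h := Multiset.prod_X_sub_C_coeff sZ (k := n - i) (by rw [hcard]; omega)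
    rw [hcard, show n - (n - i) = i from by omega] at h
    rw [hQprod]
    exact h
  have e0 := hcoeff k (by omega)
  have e1 := hcoeff (k+1) (by omega)
  have e2 := hcoeff (k+2) (by omega)
  have e3 := hcoeff (k+3) (by omega)
  rw [show k + 1 - 1 = k from by omega] at *
  rw [show k + 1 + 1 = k + 2 from by omega, show k + 1 + 2 = k + 3 from by omega]
  rw [e0, e1, e2, e3]
  have hsq : ((-1:ℤ)^k)^2 = 1 := by
    rw [← pow_mul, mul_comm, pow_mul, neg_one_sq, one_pow]
  have hs1 : ((-1:ℤ)^(k+1)) = -((-1:ℤ)^k) := by rw [pow_succ]; ring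
  have hs2 : ((-1:ℤ)^(k+2)) = ((-1:ℤ)^k) := by rw [pow_add]; norm_num
  have hs3 : ((-1:ℤ)^(k+3)) = -((-1:ℤ)^k) := by
    rw [show k+3 = (k+2)+1 from rfl, pow_succ, hs2]; ring
  rw [hs1, hs2, hs3]
  set ε := (-1:ℤ)^k with hε
  set E0 := sZ.esymm k
  set E1 := sZ.esymm (k+1)
  set E2 := sZ.esymm (k+2)
  set E3 := sZ.esymm (k+3)
  have hL : (ε * E0 * (-ε * E3) - -ε * E1 * (ε * E2))^2 = (E1*E2 - E0*E3)^2 := by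
    linear_combination ((ε^2+1)*(E1*E2-E0*E3)^2) * hsq
  have hR : 4 * ((-ε * E1)^2 - ε * E0 * (ε * E2)) * ((ε * E2)^2 - -ε * E1 * (-ε * E3))
      = 4 * (E1^2 - E0*E2) * (E2^2 - E1*E3) := by
    linear_combination (4*(ε^2+1)*(E1^2-E0*E2)*(E2^2-E1*E3)) * hsq
  rw [ge_iff_le, hL, hR]
  exact my_strong_int sZ k
end

section
/- Let n ≥ 2 and let Q ∈ F_n with coefficients a_0 = 1, a_1, ..., a_n. Then Q does not have two consecutive zero coefficients: there is no j with 1 ≤ j ≤ n−1 such that a_j = 0 and a_{j+1} = 0. -/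
open Polynomial

/-- Key Rolle-type lemma: if a real polynomial has all real roots (counted with
multiplicity), then any root of its derivative of multiplicity at least 2 is a
root of the polynomial itself. -/
lemma key_root (P : ℝ[X]) (hroots : Multiset.card P.roots = P.natDegree)
    (a : ℝ) (ha : 2 ≤ P.derivative.rootMultiplicity a) : P.eval a = 0 := by
  by_contra hPa
  have hP : P ≠ 0 := by rintro rfl; simp at hPa
  have hP' : P.derivative ≠ 0 := by
    intro h
    rw [h, rootMultiplicity_zero] at ha; omega
  set S := P.roots.toFinset with hS
  set T := P.derivative.roots.toFinset with hT
  have haT : a ∈ T := by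
    rw [hT, Multiset.mem_toFinset, mem_roots hP']
    exact (rootMultiplicity_pos hP').mp (by omega)
  have haS : a ∉ S := by
    rw [hS, Multiset.mem_toFinset, mem_roots hP]
    exact hPa
  have haTS : a ∈ T \ S := Finset.mem_sdiff.mpr ⟨haT, haS⟩
  -- Step 1: card of roots of P bounded by sum of derivative multiplicities over S plus |S|
  have h1 : Multiset.card P.roots ≤ ∑ x ∈ S, P.derivative.roots.count x + S.card := by
    calc Multiset.card P.roots = ∑ x ∈ S, P.roots.count x :=
          (Multiset.toFinset_sum_count_eq _).symm
      _ ≤ ∑ x ∈ S, (P.derivative.roots.count x + 1) := by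
          refine Finset.sum_le_sum fun x hx => ?_
          have h2 := rootMultiplicity_sub_one_le_derivative_rootMultiplicity P x
          have h3 : 0 < P.roots.count x := Multiset.count_pos.mpr (Multiset.mem_toFinset.mp hx)
          rw [count_roots] at h3 ⊢
          rw [count_roots]
          omega
      _ = ∑ x ∈ S, P.derivative.roots.count x + S.card := by
          rw [Finset.sum_add_distrib]
          simp
  have h2 : S.card ≤ (T \ S).card + 1 :=
    P.card_roots_toFinset_le_card_roots_derivative_diff_roots_succ
  -- Step 3: sum over T \ S is at least |T \ S| + 1 thanks to the double root a
  have h3 : (T \ S).card + 1 ≤ ∑ x ∈ T \ S, P.derivative.roots.count x := by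
    rw [← Finset.add_sum_erase _ _ haTS]
    have hc1 : ∀ x ∈ (T \ S).erase a, 1 ≤ P.derivative.roots.count x := by
      intro x hx
      have hxT : x ∈ T := (Finset.mem_sdiff.mp (Finset.mem_of_mem_erase hx)).1
      exact Multiset.count_pos.mpr (Multiset.mem_toFinset.mp hxT)
    have hsum : ((T \ S).erase a).card ≤ ∑ x ∈ (T \ S).erase a, P.derivative.roots.count x := by
      calc ((T \ S).erase a).card = ∑ _x ∈ (T \ S).erase a, 1 := by
            simp
        _ ≤ _ := Finset.sum_le_sum hc1
    have hca : 2 ≤ P.derivative.roots.count a := by rw [count_roots]; exact ha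
    have hcard : ((T \ S).erase a).card = (T \ S).card - 1 :=
      Finset.card_erase_of_mem haTS
    have hpos : 1 ≤ (T \ S).card := Finset.card_pos.mpr ⟨a, haTS⟩
    omega
  -- Step 4: the two sums together are at most the number of roots of P'
  have h4 : ∑ x ∈ S, P.derivative.roots.count x + ∑ x ∈ T \ S, P.derivative.roots.count x
      ≤ Multiset.card P.derivative.roots := by
    rw [← Finset.sum_union Finset.disjoint_sdiff, Finset.union_sdiff_self_eq_union]
    have heq : ∑ x ∈ S ∪ T, P.derivative.roots.count x
        = ∑ x ∈ T, P.derivative.roots.count x :=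
      (Finset.sum_subset Finset.subset_union_right (fun x _ hx =>
        Multiset.count_eq_zero_of_notMem fun hmem => hx (Multiset.mem_toFinset.mpr hmem))).symm
    rw [heq, hT]
    exact le_of_eq (Multiset.toFinset_sum_count_eq _)
  have h5 : Multiset.card P.derivative.roots ≤ P.derivative.natDegree := card_roots' _
  have hdeg : P.natDegree ≠ 0 := fun hh => hP' (derivative_of_natDegree_zero hh)
  have h6 : P.derivative.natDegree < P.natDegree := natDegree_derivative_lt hdeg
  omega

/-- The derivative of a real polynomial with all real roots again has all real roots. -/
lemma rr_der (P : ℝ[X]) (h : Multiset.card P.roots = P.natDegree) :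
    Multiset.card P.derivative.roots = P.derivative.natDegree := by
  rcases eq_or_ne P.derivative 0 with h0 | h0
  · simp [h0]
  have hdeg : P.natDegree ≠ 0 := fun hh => h0 (derivative_of_natDegree_zero hh)
  have h1 : P.derivative.natDegree = P.natDegree - 1 :=
    natDegree_eq_of_degree_eq_some (degree_derivative_eq P (Nat.pos_of_ne_zero hdeg))
  have h2 := card_roots_le_derivative P
  have h3 := card_roots' P.derivative
  omega

lemma rr_iter (P : ℝ[X]) (h : Multiset.card P.roots = P.natDegree) (k : ℕ) :
    Multiset.card (derivative^[k] P).roots = (derivative^[k] P).natDegree := by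
  induction k with
  | zero => simpa using h
  | succ k ih => rw [Function.iterate_succ_apply']; exact rr_der _ ih

theorem stmt_3 (n : ℕ) (hn : 2 ≤ n)
    (x : Fin n → ℤ) (hx : ∀ i, x i ≠ 0)
    (Q : Polynomial ℤ) (hQ : Q = ∏ i, (X - C (x i))) :
    ¬ ∃ j : ℕ, 1 ≤ j ∧ j ≤ n - 1 ∧ Q.coeff (n - j) = 0 ∧ Q.coeff (n - (j + 1)) = 0 := by
  rintro ⟨j, hj1, hj2, hc1, hc2⟩
  set P : ℝ[X] := ∏ i, (X - C ((x i : ℤ) : ℝ)) with hP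
  have hPmap : Q.map (Int.castRingHom ℝ) = P := by
    simp only [hQ, Polynomial.map_prod, Polynomial.map_sub, map_X, map_C, hP]
    rfl
  have hPcoeff : ∀ k, P.coeff k = ((Q.coeff k : ℤ) : ℝ) := by
    intro k; rw [← hPmap, coeff_map]; rfl
  have hPmonic : P.Monic := monic_prod_of_monic _ _ fun i _ => monic_X_sub_C _
  have hPne : P ≠ 0 := hPmonic.ne_zero
  have hPdeg : P.natDegree = n := by
    rw [hP, natDegree_prod_of_monic _ _ fun i _ => monic_X_sub_C _]
    simp only [natDegree_X_sub_C]
    simp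
  have hProots : Multiset.card P.roots = P.natDegree := by
    rw [hPdeg, hP, roots_prod _ _ (by rw [← hP]; exact hPne)]
    rw [Multiset.card_bind]
    simp only [roots_X_sub_C, Multiset.card_singleton]
    simp
  -- the index of the lower vanishing coefficient
  set m : ℕ := n - (j + 1) with hm
  have hjn : j + 1 ≤ n := by omega
  have hm1 : m + 1 = n - j := by omega
  have hm2 : m + 2 ≤ n := by omega
  -- degrees of iterated derivatives
  have hdegiter : ∀ k ≤ n, (derivative^[k] P).natDegree = n - k := by
    intro k hk
    induction k with
    | zero => simpa using hPdeg
    | succ k ih =>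
      have hk' : k ≤ n := by omega
      have hik := ih hk'
      have hpos : 0 < (derivative^[k] P).natDegree := by omega
      rw [Function.iterate_succ_apply',
        natDegree_eq_of_degree_eq_some (degree_derivative_eq _ hpos), hik]
      omega
  have hDne : ∀ k ≤ n - 1, derivative^[k] P ≠ 0 := by
    intro k hk h0
    have := hdegiter k (by omega)
    rw [h0, natDegree_zero] at this
    omega
  -- the m-th derivative has a double root at 0
  have hD2 : 2 ≤ rootMultiplicity 0 (derivative^[m] P) := by
    rw [le_rootMultiplicity_iff (hDne m (by omega)), map_zero, sub_zero, X_pow_dvd_iff]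
    intro d hd
    interval_cases d
    · rw [coeff_iterate_derivative]
      have : P.coeff (0 + m) = 0 := by
        rw [hPcoeff]; norm_num [hm, hc2]; exact hc2
      rw [this, smul_zero]
    · rw [coeff_iterate_derivative]
      have : P.coeff (1 + m) = 0 := by
        rw [hPcoeff]
        have : 1 + m = n - j := by omega
        rw [this, hc1]; norm_num
      rw [this, smul_zero]
  -- propagate the double root downwards
  have hchain : ∀ k ≤ m, 2 ≤ rootMultiplicity 0 (derivative^[m - k] P) := by
    intro k hk
    induction k with
    | zero => simpa using hD2
    | succ k ih =>
      have hk' : k ≤ m := by omega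
      have ihk := ih hk'
      set E := derivative^[m - (k + 1)] P with hE
      have hstep : derivative^[m - k] P = derivative E := by
        have hmk : m - k = (m - (k + 1)) + 1 := by omega
        rw [hE, hmk, Function.iterate_succ_apply']
      have hErr : Multiset.card E.roots = E.natDegree := rr_iter P hProots _
      have hEroot : E.eval 0 = 0 := by
        apply key_root E hErr 0
        rw [← hstep]; exact ihk
      have hEne : E ≠ 0 := hDne _ (by omega)
      have := derivative_rootMultiplicity_of_root (p := E) (t := 0) hEroot
      rw [← hstep] at this
      omega
  have hfin := hchain m le_rfl
  simp only [Nat.sub_self, Function.iterate_zero_apply] at hfin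
  have hroot0 : P.eval 0 = 0 := (rootMultiplicity_pos hPne).mp (by omega)
  rw [hP, eval_prod] at hroot0
  rw [Finset.prod_eq_zero_iff] at hroot0
  obtain ⟨i, _, hi⟩ := hroot0
  simp only [eval_sub, eval_X, eval_C, zero_sub, neg_eq_zero, Int.cast_eq_zero] at hi
  exact hx i hi
end

section
/- Let n ≥ 2 and let Q ∈ F_n with coefficients a_0 = 1, a_1, ..., a_n. If a_j = 0 for some j ∈ {1, ..., n−1}, then a_{j−1} a_{j+1} < 0. -/
open Polynomial

noncomputable def PP (s : Multiset ℝ) : Polynomial ℝ := (s.map fun a => X - C a).prod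

lemma PP_cons (t : ℝ) (s : Multiset ℝ) : PP (t ::ₘ s) = (X - C t) * PP s := by
  simp [PP]

lemma A_cons (t : ℝ) (s : Multiset ℝ) :
    (PP (t ::ₘ s)).eval 0 = -t * (PP s).eval 0 := by
  rw [PP_cons, eval_mul, eval_sub, eval_X, eval_C]; ring

lemma B_cons (t : ℝ) (s : Multiset ℝ) :
    (derivative (PP (t ::ₘ s))).eval 0 = -t * (derivative (PP s)).eval 0 + (PP s).eval 0 := by
  rw [PP_cons, derivative_mul]
  simp only [derivative_sub, derivative_X, derivative_C, sub_zero, one_mul, eval_add, eval_mul,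
    eval_sub, eval_X, eval_C]
  ring

lemma C_cons (t : ℝ) (s : Multiset ℝ) :
    (derivative (derivative (PP (t ::ₘ s)))).eval 0
      = -t * (derivative (derivative (PP s))).eval 0 + 2 * (derivative (PP s)).eval 0 := by
  rw [PP_cons, derivative_mul, derivative_add, derivative_mul, derivative_mul]
  simp only [derivative_sub, derivative_X, derivative_C, sub_zero, one_mul, derivative_one,
    zero_mul, eval_add, eval_mul, eval_sub, eval_X, eval_C, eval_zero]
  ring

lemma Phi_nonneg (s : Multiset ℝ) :
    0 ≤ (derivative (PP s)).eval 0 ^ 2 - (PP s).eval 0 * (derivative (derivative (PP s))).eval 0 := by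
  induction s using Multiset.induction with
  | empty => simp [PP]
  | cons t s ih =>
    rw [A_cons, B_cons, C_cons]
    nlinarith [mul_nonneg (sq_nonneg t) ih, sq_nonneg ((PP s).eval 0)]

lemma A_ne_zero {s : Multiset ℝ} (hs : ∀ a ∈ s, a ≠ 0) : (PP s).eval 0 ≠ 0 := by
  simp only [PP, eval_multiset_prod, Multiset.map_map]
  apply Multiset.prod_ne_zero
  intro h
  simp only [Multiset.mem_map] at h
  obtain ⟨a, ha, he⟩ := h
  simp at he
  exact hs a ha he

lemma Phi_pos {s : Multiset ℝ} (hne : s ≠ 0) (hs : ∀ a ∈ s, a ≠ 0) :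
    0 < (derivative (PP s)).eval 0 ^ 2 - (PP s).eval 0 * (derivative (derivative (PP s))).eval 0 := by
  obtain ⟨t, ht⟩ := Multiset.exists_mem_of_ne_zero hne
  obtain ⟨s', rfl⟩ := Multiset.exists_cons_of_mem ht
  rw [A_cons, B_cons, C_cons]
  have h1 := Phi_nonneg s'
  have h2 : (PP s').eval 0 ≠ 0 := A_ne_zero fun a ha => hs a (Multiset.mem_cons_of_mem ha)
  have h3 : 0 < (PP s').eval 0 ^ 2 := by positivity
  nlinarith [mul_nonneg (sq_nonneg t) h1]

lemma lemA (h : Polynomial ℝ) (hroots : Multiset.card h.roots = h.natDegree)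
    (hd : 1 ≤ h.natDegree) (h0 : h.coeff 0 ≠ 0) (h1 : h.coeff 1 = 0) :
    h.coeff 2 * h.coeff 0 < 0 := by
  have hfac := C_leadingCoeff_mul_prod_multiset_X_sub_C hroots
  set s := h.roots with hs
  set c := h.leadingCoeff with hc
  have hh : h = C c * PP s := by rw [PP, hfac]
  have hcne : c ≠ 0 := by
    intro hzc
    apply h0
    rw [hh, hzc]; simp
  have d0 : (PP s).eval 0 = (PP s).coeff 0 := (coeff_zero_eq_eval_zero _).symm
  have d1 : (derivative (PP s)).eval 0 = (PP s).coeff 1 := by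
    rw [← coeff_zero_eq_eval_zero, coeff_derivative]; norm_num
  have d2 : (derivative (derivative (PP s))).eval 0 = 2 * (PP s).coeff 2 := by
    rw [← coeff_zero_eq_eval_zero, coeff_derivative, coeff_derivative]; push_cast; ring
  have e0 : h.coeff 0 = c * (PP s).coeff 0 := by rw [hh, coeff_C_mul]
  have e1 : h.coeff 1 = c * (PP s).coeff 1 := by rw [hh, coeff_C_mul]
  have e2 : h.coeff 2 = c * (PP s).coeff 2 := by rw [hh, coeff_C_mul]
  have hsne : s ≠ 0 := by
    intro h'
    rw [h', Multiset.card_zero] at hroots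
    omega
  have hablnz : ∀ a ∈ s, a ≠ 0 := by
    intro a ha ha0
    apply h0
    rw [coeff_zero_eq_eval_zero]
    have : h.IsRoot a := isRoot_of_mem_roots ha
    subst ha0
    exact this
  have hphi := Phi_pos hsne hablnz
  rw [d0, d1, d2] at hphi
  have hB : (PP s).coeff 1 = 0 := by
    rw [e1] at h1
    rcases mul_eq_zero.1 h1 with h' | h'
    · exact absurd h' hcne
    · exact h'
  rw [hB] at hphi
  rw [e0, e2]
  nlinarith [sq_nonneg c, mul_pos (mul_self_pos.2 hcne) hphi]

lemma iter_deriv_rooted (p : Polynomial ℝ) (N : ℕ)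
    (hdeg : p.natDegree = N) (hroots : Multiset.card p.roots = N) :
    ∀ k ≤ N, (derivative^[k] p).natDegree = N - k ∧
      Multiset.card (derivative^[k] p).roots = N - k := by
  intro k hk
  induction k with
  | zero => simpa using ⟨hdeg, hroots⟩
  | succ k ih =>
    obtain ⟨hd, hr⟩ := ih (Nat.le_of_succ_le hk)
    set q := derivative^[k] p with hq
    have h1 : Multiset.card q.roots ≤ Multiset.card (derivative q).roots + 1 :=
      card_roots_le_derivative q
    have h2 : Multiset.card (derivative q).roots ≤ (derivative q).natDegree :=
      (derivative q).card_roots'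
    have h3 : (derivative q).natDegree ≤ q.natDegree - 1 := natDegree_derivative_le q
    rw [Function.iterate_succ_apply', ← hq]
    constructor <;> omega

section main
variable {n : ℕ} (x : Fin n → ℤ)

noncomputable def Pr (x : Fin n → ℤ) : Polynomial ℝ := ∏ i, (X - C ((x i : ℝ)))

lemma Pr_eq : Pr x = (Multiset.map (fun a => X - C a) ((Finset.univ.val.map fun i => ((x i : ℝ))))).prod := by
  rw [Pr, Finset.prod_eq_multiset_prod, Multiset.map_map]
  rfl

lemma Pr_roots : (Pr x).roots = Finset.univ.val.map fun i => ((x i : ℝ)) := by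
  rw [Pr_eq, roots_multiset_prod_X_sub_C]

lemma Pr_natDegree : (Pr x).natDegree = n := by
  rw [Pr_eq, natDegree_multiset_prod_X_sub_C_eq_card]
  simp

lemma Pr_roots_card : Multiset.card (Pr x).roots = n := by
  rw [Pr_roots]; simp

lemma Pr_coeff0 (hx : ∀ i, x i ≠ 0) : (Pr x).coeff 0 ≠ 0 := by
  rw [coeff_zero_eq_eval_zero, Pr, eval_prod]
  apply Finset.prod_ne_zero_iff.2
  intro i _
  simp only [eval_sub, eval_X, eval_C, zero_sub, neg_ne_zero]
  exact_mod_cast hx i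

lemma iter_coeff (p : Polynomial ℝ) (k m : ℕ) :
    (derivative^[k] p).coeff m = ((m + k).descFactorial k : ℝ) * p.coeff (m + k) := by
  rw [coeff_iterate_derivative, nsmul_eq_mul]

lemma no_consec (hx : ∀ i, x i ≠ 0) :
    ∀ p, p ≤ n - 1 → (Pr x).coeff p = 0 → (Pr x).coeff (p + 1) = 0 → False := by
  intro p
  induction p with
  | zero => intro _ h0 _; exact Pr_coeff0 x hx h0
  | succ q ih =>
    intro hle h0 h1
    by_cases hq : (Pr x).coeff q = 0
    · exact ih (by omega) hq h0
    · obtain ⟨hd, hr⟩ := iter_deriv_rooted (Pr x) n (Pr_natDegree x) (Pr_roots_card x) q (by omega)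
      have dne : ((0 + q).descFactorial q : ℝ) ≠ 0 := by
        have : (0 + q).descFactorial q ≠ 0 := by
          rw [Ne, Nat.descFactorial_eq_zero_iff_lt]; omega
        exact_mod_cast this
      have c0 := iter_coeff (Pr x) q 0
      rw [show 0 + q = q by omega] at c0
      have c1 := iter_coeff (Pr x) q 1
      have c2 := iter_coeff (Pr x) q 2
      rw [show 1 + q = q + 1 by omega, h0, mul_zero] at c1
      rw [show 2 + q = q + 1 + 1 by omega, h1, mul_zero] at c2
      have key := lemA (derivative^[q] (Pr x)) (by rw [hd, hr]) (by omega)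
        (by rw [c0]; exact mul_ne_zero (by rwa [show (0:ℕ) + q = q from by omega] at dne) hq) c1
      rw [c2] at key
      simp at key

end main

theorem stmt_4 (n : ℕ) (hn : 2 ≤ n)
    (x : Fin n → ℤ) (hx : ∀ i, x i ≠ 0)
    (Q : Polynomial ℤ) (hQ : Q = ∏ i, (X - C (x i)))
    (j : ℕ) (hj1 : 1 ≤ j) (hj2 : j ≤ n - 1) (hzero : Q.coeff (n - j) = 0) :
    Q.coeff (n - (j - 1)) * Q.coeff (n - (j + 1)) < 0 := by
  have hmap : ∀ k, (Pr x).coeff k = ((Q.coeff k : ℤ) : ℝ) := by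
    intro k
    have : Pr x = Q.map (Int.castRingHom ℝ) := by
      rw [hQ, Polynomial.map_prod, Pr]
      congr 1
      ext i : 1
      rw [Polynomial.map_sub, Polynomial.map_X, Polynomial.map_C]
      norm_num
    rw [this, coeff_map]
    rfl
  have hjn : j + 1 ≤ n := by omega
  set a := n - (j + 1) with ha
  have ha1 : a + 1 = n - j := by omega
  have ha2 : a + 2 = n - (j - 1) := by omega
  have hc1 : (Pr x).coeff (a + 1) = 0 := by rw [hmap, ha1, hzero]; norm_num
  -- neighbors nonzero
  have hA : (Pr x).coeff a ≠ 0 := by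
    intro h'
    exact no_consec x hx a (by omega) h' hc1
  have hB : (Pr x).coeff (a + 2) ≠ 0 := by
    intro h'
    exact no_consec x hx (a + 1) (by omega) hc1 (by rw [show a + 1 + 1 = a + 2 by omega]; exact h')
  obtain ⟨hd, hr⟩ := iter_deriv_rooted (Pr x) n (Pr_natDegree x) (Pr_roots_card x) a (by omega)
  have d0ne : ((0 + a).descFactorial a : ℝ) ≠ 0 := by
    have : (0 + a).descFactorial a ≠ 0 := by
      rw [Ne, Nat.descFactorial_eq_zero_iff_lt]; omega
    exact_mod_cast this
  have d2pos : (0:ℝ) < ((a + 2).descFactorial a : ℝ) := by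
    have : (a + 2).descFactorial a ≠ 0 := by
      rw [Ne, Nat.descFactorial_eq_zero_iff_lt]; omega
    have := Nat.pos_of_ne_zero this
    exact_mod_cast this
  have d0pos : (0:ℝ) < ((a).descFactorial a : ℝ) := by
    have : (a).descFactorial a ≠ 0 := by
      rw [Ne, Nat.descFactorial_eq_zero_iff_lt]; omega
    have := Nat.pos_of_ne_zero this
    exact_mod_cast this
  have c0 := iter_coeff (Pr x) a 0
  have c1 := iter_coeff (Pr x) a 1
  have c2 := iter_coeff (Pr x) a 2
  rw [show 1 + a = a + 1 by omega, hc1, mul_zero] at c1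
  rw [show 2 + a = a + 2 by omega] at c2
  have key := lemA (derivative^[a] (Pr x)) (by rw [hd, hr]) (by omega)
    (by rw [c0]; exact mul_ne_zero d0ne (by rwa [show (0:ℕ) + a = a from by omega])) c1
  rw [c0, c2, show (0:ℕ) + a = a from by omega] at key
  have hreal : (Pr x).coeff (a + 2) * (Pr x).coeff a < 0 := by
    nlinarith [mul_pos d2pos d0pos]
  rw [hmap, hmap, ha2, ha] at hreal
  exact_mod_cast hreal
end

section
/- Let n ≥ 2 and let Q ∈ F_n with coefficients a_0 = 1, a_1, ..., a_n and roots x_1, ..., x_n ∈ ℤ \ {0}. Then max(|x_1|, ..., |x_n|) ≤ √2 · max(|a_1|, |a_2|). -/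
open Polynomial

lemma esymm_two_cons (a : ℤ) (s : Multiset ℤ) :
    (a ::ₘ s).esymm 2 = a * s.sum + s.esymm 2 := by
  rw [Multiset.esymm, show (2:ℕ) = 1+1 from rfl, Multiset.powersetCard_cons,
    Multiset.map_add, Multiset.sum_add, Multiset.map_map]
  rw [Multiset.powersetCard_one, Multiset.map_map]
  have h : (Multiset.map (fun t => a * t) s).sum = a * s.sum := by
    induction s using Multiset.induction <;> simp [*, mul_add]
  simp only [Multiset.esymm, Function.comp, Multiset.prod_cons, Multiset.prod_singleton]
  rw [h]
  ring

lemma sq_sum_multiset (s : Multiset ℤ) :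
    s.sum ^ 2 = (s.map (fun t => t^2)).sum + 2 * s.esymm 2 := by
  induction s using Multiset.induction with
  | empty => simp [Multiset.esymm]; rw [Multiset.powersetCard_eq_empty 2 (by simp)]; simp
  | cons a s ih =>
      rw [Multiset.sum_cons, Multiset.map_cons, Multiset.sum_cons, esymm_two_cons]
      ring_nf
      ring_nf at ih
      linarith

theorem stmt_5 (n : ℕ) (hn : 2 ≤ n)
    (x : Fin n → ℤ) (hx : ∀ i, x i ≠ 0)
    (Q : Polynomial ℤ) (hQ : Q = ∏ i, (X - C (x i))) :
    ∀ i, (|x i| : ℝ) ≤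
      Real.sqrt 2 * max |((Q.coeff (n - 1) : ℤ) : ℝ)| |((Q.coeff (n - 2) : ℤ) : ℝ)| := by
  intro j
  set s : Multiset ℤ := (Finset.univ.val.map x) with hs
  have hcard : Multiset.card s = n := by simp [hs]
  have hQ' : Q = (s.map fun t => X - C t).prod := by
    rw [hQ, Finset.prod_eq_multiset_prod, hs, Multiset.map_map]; rfl
  have hA : Q.coeff (n - 1) = - ∑ i, x i := by
    rw [hQ]
    simpa using prod_X_sub_C_coeff_card_pred Finset.univ x (by simp; omega)
  have hB : Q.coeff (n - 2) = s.esymm 2 := by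
    rw [hQ', Multiset.prod_X_sub_C_coeff s (k := n - 2) (by rw [hcard]; omega)]
    rw [hcard, show n - (n-2) = 2 by omega]
    norm_num
  set A : ℤ := ∑ i, x i with hAdef
  set B : ℤ := s.esymm 2 with hBdef
  set T : ℤ := ∑ i, (x i)^2 with hTdef
  have hsum : A ^ 2 = T + 2 * B := by
    have h1 : s.sum = A := by
      rw [hs, hAdef, Finset.sum_eq_multiset_sum]
    have h2 : (s.map (fun t => t^2)).sum = T := by
      rw [hs, Multiset.map_map, hTdef, Finset.sum_eq_multiset_sum]; rfl
    have := sq_sum_multiset s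
    rw [h1, h2] at this
    exact this
  have hT1 : (x j)^2 ≤ T := by
    exact Finset.single_le_sum (fun i _ => sq_nonneg (x i)) (Finset.mem_univ j)
  have hT2 : 2 ≤ T := by
    have : (n : ℤ) ≤ T := by
      rw [hTdef]
      calc (n : ℤ) = ∑ _i : Fin n, (1:ℤ) := by simp
        _ ≤ ∑ i, (x i)^2 := Finset.sum_le_sum (fun i _ => by
            have h0 : (x i)^2 ≠ 0 := pow_ne_zero _ (hx i)
            have h1 := sq_nonneg (x i)
            omega)
    omega
  set M : ℤ := max |A| |B| with hMdef
  have hAM : |A| ≤ M := le_max_left _ _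
  have hBM : |B| ≤ M := le_max_right _ _
  have hM0 : 0 ≤ M := le_trans (abs_nonneg A) hAM
  have hkey : (x j)^2 ≤ 2 * M^2 := by
    rcases le_or_gt 2 M with h | h
    · nlinarith [sq_abs A, neg_abs_le B, pow_le_pow_left₀ (abs_nonneg A) hAM 2]
    · have hM1 : 1 ≤ M := by
        by_contra h'
        push_neg at h'
        have hMz : M = 0 := by omega
        have hA0 : A = 0 := by
          have := abs_nonneg A; have : |A| = 0 := by omega
          exact abs_eq_zero.mp this
        have hB0 : B = 0 := by
          have := abs_nonneg B; have : |B| = 0 := le_antisymm (hMz ▸ hBM) (abs_nonneg B)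
          exact abs_eq_zero.mp this
        rw [hA0, hB0] at hsum
        omega
      have hMeq : M = 1 := by omega
      have hxj : |x j| ≤ 1 := by
        by_contra h'
        push_neg at h'
        have h2 : 2 ≤ |x j| := h'
        have h4 : 4 ≤ (x j)^2 := by nlinarith [sq_abs (x j)]
        have hAb := abs_le.mp (hMeq ▸ hAM)
        have hBb := abs_le.mp (hMeq ▸ hBM)
        nlinarith
      nlinarith [sq_abs (x j), abs_nonneg (x j)]
  have hmax : max |((Q.coeff (n - 1) : ℤ) : ℝ)| |((Q.coeff (n - 2) : ℤ) : ℝ)| = (M : ℝ) := by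
    rw [hA, hB, hMdef]
    push_cast
    rw [abs_neg]
  rw [hmax]
  have hcast : ((x j : ℝ))^2 ≤ 2 * (M : ℝ)^2 := by exact_mod_cast hkey
  have hMR : (0:ℝ) ≤ (M:ℝ) := by exact_mod_cast hM0
  calc (|x j| : ℝ) = |((x j : ℤ) : ℝ)| := by push_cast; ring
    _ = Real.sqrt (((x j : ℤ) : ℝ)^2) := (Real.sqrt_sq_eq_abs _).symm
    _ ≤ Real.sqrt (2 * (M:ℝ)^2) := Real.sqrt_le_sqrt hcast
    _ = Real.sqrt 2 * Real.sqrt ((M:ℝ)^2) := Real.sqrt_mul (by norm_num) _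
    _ = Real.sqrt 2 * (M:ℝ) := by rw [Real.sqrt_sq_eq_abs, abs_of_nonneg hMR]
end

section
/- For every integer t ≥ 5, one has 15 · ∏_{j=2}^{t−3} (4 · 2^⌊(j+1)/2⌋ − 1) ≤ 2^(((t+1)² + 2(t+1) − 20)/4). -/
private noncomputable def Lhs (t : ℕ) : ℝ :=
  (15 : ℝ) * ∏ j ∈ Finset.Icc 2 (t - 3), ((4 * 2 ^ ((j + 1) / 2) - 1 : ℕ) : ℝ)

private noncomputable def Rhs (t : ℕ) : ℝ :=
  (2 : ℝ) ^ (((((t : ℝ) + 1) ^ 2 + 2 * ((t : ℝ) + 1) - 20)) / 4)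

private lemma factor_le (e : ℕ) : ((4 * 2 ^ e - 1 : ℕ) : ℝ) ≤ (4 : ℝ) * 2 ^ e := by
  calc ((4 * 2 ^ e - 1 : ℕ) : ℝ) ≤ ((4 * 2 ^ e : ℕ) : ℝ) := by
        exact_mod_cast Nat.sub_le _ _
    _ = (4 : ℝ) * 2 ^ e := by push_cast; ring

private lemma step (t : ℕ) (ht : 5 ≤ t) (ih : Lhs t ≤ Rhs t) : Lhs (t + 2) ≤ Rhs (t + 2) := by
  have h1 : (t + 2) - 3 = ((t - 3) + 1) + 1 := by omega
  have hL : Lhs (t + 2) = Lhs t *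
      (((4 * 2 ^ ((t - 1) / 2) - 1 : ℕ) : ℝ) * ((4 * 2 ^ (((t - 1) + 1) / 2) - 1 : ℕ) : ℝ)) := by
    unfold Lhs
    rw [h1, Finset.prod_Icc_succ_top (by omega), Finset.prod_Icc_succ_top (by omega)]
    have e2 : (t - 3) + 1 + 1 = t - 1 := by omega
    rw [e2]; ring
  have key : (((4 * 2 ^ ((t - 1) / 2) - 1 : ℕ) : ℝ) * ((4 * 2 ^ (((t - 1) + 1) / 2) - 1 : ℕ) : ℝ))
      ≤ (2 : ℝ) ^ (t + 3 : ℕ) := by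
    have h2 : (t - 1) / 2 + ((t - 1) + 1) / 2 = t - 1 := by omega
    calc ((4 * 2 ^ ((t - 1) / 2) - 1 : ℕ) : ℝ) * ((4 * 2 ^ (((t - 1) + 1) / 2) - 1 : ℕ) : ℝ)
        ≤ ((4 : ℝ) * 2 ^ ((t - 1) / 2)) * ((4 : ℝ) * 2 ^ (((t - 1) + 1) / 2)) := by
          apply mul_le_mul (factor_le _) (factor_le _) (by positivity) (by positivity)
      _ = 16 * 2 ^ ((t - 1) / 2 + ((t - 1) + 1) / 2) := by rw [pow_add]; ring
      _ = 16 * 2 ^ (t - 1) := by rw [h2]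
      _ = (2 : ℝ) ^ ((t - 1) + 4) := by rw [pow_add]; ring
      _ = (2 : ℝ) ^ (t + 3 : ℕ) := by congr 1; omega
  have hR : Rhs (t + 2) = Rhs t * (2 : ℝ) ^ (t + 3 : ℕ) := by
    unfold Rhs
    rw [← Real.rpow_natCast (2 : ℝ) (t + 3), ← Real.rpow_add (by norm_num)]
    congr 1
    push_cast
    ring
  rw [hL, hR]
  exact mul_le_mul ih key (by positivity) (Real.rpow_nonneg (by norm_num) _)

private lemma base5 : Lhs 5 ≤ Rhs 5 := by
  unfold Lhs Rhs
  norm_num [Finset.Icc_self, Finset.prod_singleton]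

private lemma base6 : Lhs 6 ≤ Rhs 6 := by
  unfold Lhs Rhs
  have hIcc : Finset.Icc 2 (6 - 3) = {2, 3} := by decide
  rw [hIcc]
  norm_num [Finset.prod_insert, Finset.prod_singleton]
  have h0 : (0:ℝ) ≤ (2:ℝ) ^ ((43:ℝ)/4) := Real.rpow_nonneg (by norm_num) _
  have h4 : ((1575 : ℝ)) ^ (4:ℕ) ≤ ((2:ℝ) ^ ((43:ℝ)/4)) ^ (4:ℕ) := by
    rw [← Real.rpow_natCast ((2:ℝ) ^ ((43:ℝ)/4)) 4, ← Real.rpow_mul (by norm_num)]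
    rw [show ((43:ℝ)/4 * (4:ℕ)) = ((43:ℕ):ℝ) by push_cast; ring, Real.rpow_natCast]
    norm_num
  exact le_of_pow_le_pow_left₀ (by norm_num) h0 h4

theorem stmt_9 (t : ℕ) (ht : 5 ≤ t) :
    (15 : ℝ) * ∏ j ∈ Finset.Icc 2 (t - 3), ((4 * 2 ^ ((j + 1) / 2) - 1 : ℕ) : ℝ) ≤
      (2 : ℝ) ^ (((((t : ℝ) + 1) ^ 2 + 2 * ((t : ℝ) + 1) - 20)) / 4) := by
  suffices h : Lhs t ≤ Rhs t by exact h
  obtain ⟨k, hk⟩ : ∃ k, t = 2 * k + 5 ∨ t = 2 * k + 6 := ⟨(t - 5) / 2, by omega⟩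
  have main : ∀ k, Lhs (2 * k + 5) ≤ Rhs (2 * k + 5) ∧ Lhs (2 * k + 6) ≤ Rhs (2 * k + 6) := by
    intro k
    induction k with
    | zero => exact ⟨base5, base6⟩
    | succ n ihn =>
      constructor
      · have := step (2 * n + 5) (by omega) ihn.1
        convert this using 2 <;> omega
      · have := step (2 * n + 6) (by omega) ihn.2
        convert this using 2 <;> omega
  rcases hk with h | h <;> subst h
  · exact (main k).1
  · exact (main k).2
end
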